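/- Assume h₁, h₂ are continuously differentiable and the quotient h̃₁ := h₁/h₂ has nonpositive derivative on [0,∞). Let (y₁,y₂) : [0,T) → (0,∞)² be a differentiable solution of the ODE system with y₁(0), y₂(0) > 0. If a₁ > 0 and a₂ = 0, then there exists a constant c > 0 such that y₁(t)^{a₁} ≥ c·(h₁(t)/h₂(t))·log(y₂(t)) for all t ∈ [0,T). -/

import Mathlib

open Set Topology Filter

/-- Lemma 5.1(b) of the paper. If `h₁,h₂` are continuously
differentiable with `(h₁/h₂)' ≤ 0` on `[0,∞)`, `(y₁,y₂)` is a positive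
differentiable solution of the ODE system on `[0,T)`, `a₁ = p₂₁-p₁₁+1 > 0` and
`a₂ = p₁₂-p₂₂+1 = 0`, then there is `c > 0` with
`y₁(t)^{a₁} ≥ c (h₁(t)/h₂(t)) log(y₂(t))` on `[0,T)`. -/
theorem statement9 (p11 p12 p21 p22 : ℝ)
    (hp11 : 0 ≤ p11) (hp12 : 0 ≤ p12) (hp21 : 0 ≤ p21) (hp22 : 0 ≤ p22)
    (h1 h2 : ℝ → ℝ)
    (hh1c : ContDiffOn ℝ 1 h1 (Set.Ici 0)) (hh2c : ContDiffOn ℝ 1 h2 (Set.Ici 0))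
    (hh1p : ∀ t : ℝ, 0 ≤ t → 0 < h1 t) (hh2p : ∀ t : ℝ, 0 ≤ t → 0 < h2 t)
    (hdec : ∀ t : ℝ, 0 ≤ t →
      derivWithin (fun s => h1 s / h2 s) (Set.Ici 0) t ≤ 0)
    (T : ℝ) (hT : 0 < T)
    (y1 y2 : ℝ → ℝ)
    (hy1pos : ∀ t ∈ Set.Ico (0:ℝ) T, 0 < y1 t)
    (hy2pos : ∀ t ∈ Set.Ico (0:ℝ) T, 0 < y2 t)
    (hy1d : ∀ t ∈ Set.Ico (0:ℝ) T,
      HasDerivWithinAt y1 (h1 t * y1 t ^ p11 * y2 t ^ p12) (Set.Ico 0 T) t)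
    (hy2d : ∀ t ∈ Set.Ico (0:ℝ) T,
      HasDerivWithinAt y2 (h2 t * y2 t ^ p22 * y1 t ^ p21) (Set.Ico 0 T) t)
    (ha1 : 0 < p21 - p11 + 1) (ha2 : p12 - p22 + 1 = 0) :
    ∃ c : ℝ, 0 < c ∧ ∀ t ∈ Set.Ico (0:ℝ) T,
      c * (h1 t / h2 t) * Real.log (y2 t) ≤ y1 t ^ (p21 - p11 + 1) := by
  set a1 : ℝ := p21 - p11 + 1 with ha1def
  set g : ℝ → ℝ := fun s => h1 s / h2 s with hgdef
  have hgpos : ∀ t : ℝ, 0 ≤ t → 0 < g t := fun t ht => div_pos (hh1p t ht) (hh2p t ht)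
  have hgc : ContinuousOn g (Ici 0) :=
    (hh1c.continuousOn).div (hh2c.continuousOn) (fun t ht => (hh2p t ht).ne')
  have hgder : ∀ u : ℝ, 0 < u → HasDerivAt g (deriv g u) u ∧ deriv g u ≤ 0 := by
    intro u hu
    have hn : Ici (0:ℝ) ∈ 𝓝 u := Ici_mem_nhds hu
    have hdw : DifferentiableWithinAt ℝ g (Ici 0) u :=
      ((hh1c.differentiableOn one_ne_zero u hu.le).div
        (hh2c.differentiableOn one_ne_zero u hu.le) (hh2p u hu.le).ne')
    have hda : DifferentiableAt ℝ g u := hdw.differentiableAt hn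
    refine ⟨hda.hasDerivAt, ?_⟩
    have h := hdec u hu.le
    rwa [derivWithin_of_mem_nhds hn] at h
  have h0mem : (0:ℝ) ∈ Ico (0:ℝ) T := ⟨le_rfl, hT⟩
  have hy2cT : ContinuousOn y2 (Ico 0 T) := fun u hu => (hy2d u hu).continuousWithinAt
  have hy1cT : ContinuousOn y1 (Ico 0 T) := fun u hu => (hy1d u hu).continuousWithinAt
  obtain ⟨c, hc0, hca1, hcinit⟩ : ∃ c : ℝ, 0 < c ∧ c ≤ a1 ∧
      c * g 0 * Real.log (y2 0) ≤ y1 0 ^ a1 := by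
    by_cases hL : 0 < Real.log (y2 0)
    · have hgp := hgpos 0 le_rfl
      have hden : 0 < g 0 * Real.log (y2 0) := mul_pos hgp hL
      have hnum : 0 < y1 0 ^ a1 := Real.rpow_pos_of_pos (hy1pos 0 h0mem) _
      refine ⟨min a1 (y1 0 ^ a1 / (g 0 * Real.log (y2 0))), lt_min ha1 (div_pos hnum hden),
        min_le_left _ _, ?_⟩
      have hm := min_le_right a1 (y1 0 ^ a1 / (g 0 * Real.log (y2 0)))
      calc min a1 (y1 0 ^ a1 / (g 0 * Real.log (y2 0))) * g 0 * Real.log (y2 0)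
          ≤ (y1 0 ^ a1 / (g 0 * Real.log (y2 0))) * g 0 * Real.log (y2 0) := by
            have := mul_le_mul_of_nonneg_right
              (mul_le_mul_of_nonneg_right hm hgp.le) hL.le
            linarith
        _ = y1 0 ^ a1 := by
            rw [mul_assoc, div_mul_cancel₀ _ hden.ne']
    · refine ⟨a1, ha1, le_rfl, ?_⟩
      have h1 : a1 * g 0 * Real.log (y2 0) ≤ 0 :=
        mul_nonpos_of_nonneg_of_nonpos (mul_pos ha1 (hgpos 0 le_rfl)).le (not_lt.mp hL)
      exact h1.trans (Real.rpow_pos_of_pos (hy1pos 0 h0mem) _).le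
  refine ⟨c, hc0, ?_⟩
  intro t ht
  obtain ⟨ht0, htT⟩ := ht
  by_cases hLt : Real.log (y2 t) ≤ 0
  · have h1 : c * g t * Real.log (y2 t) ≤ 0 :=
      mul_nonpos_of_nonneg_of_nonpos (mul_pos hc0 (hgpos t ht0)).le hLt
    exact h1.trans (Real.rpow_pos_of_pos (hy1pos t ⟨ht0, htT⟩) _).le
  push_neg at hLt
  set L : ℝ → ℝ := fun u => y1 u ^ a1 - c * g u * Real.log (y2 u) with hLdef
  obtain ⟨s, hs0, hst, hLs, hgt1⟩ : ∃ s : ℝ, 0 ≤ s ∧ s ≤ t ∧ 0 ≤ L s ∧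
      ∀ u, s < u → u ≤ t → 1 < y2 u := by
    have hIccsub : Icc (0:ℝ) t ⊆ Ico (0:ℝ) T := fun u hu => ⟨hu.1, lt_of_le_of_lt hu.2 htT⟩
    by_cases hS : ∃ u ∈ Icc (0:ℝ) t, y2 u ≤ 1
    · set S : Set ℝ := Icc (0:ℝ) t ∩ y2 ⁻¹' (Iic 1) with hSdef
      have hSne : S.Nonempty := by
        obtain ⟨u, hu1, hu2⟩ := hS; exact ⟨u, hu1, hu2⟩
      have hy2cont : ContinuousOn y2 (Icc 0 t) := hy2cT.mono hIccsub
      have hSclosed : IsClosed S :=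
        hy2cont.preimage_isClosed_of_isClosed isClosed_Icc isClosed_Iic
      have hScomp : IsCompact S :=
        IsCompact.of_isClosed_subset isCompact_Icc hSclosed inter_subset_left
      have hsmem : sSup S ∈ S := hScomp.sSup_mem hSne
      obtain ⟨⟨hs0, hst⟩, hsle⟩ := hsmem
      refine ⟨sSup S, hs0, hst, ?_, ?_⟩
      · have hlog : Real.log (y2 (sSup S)) ≤ 0 := Real.log_nonpos
          (hy2pos _ (hIccsub ⟨hs0, hst⟩)).le hsle
        have h1 : c * g (sSup S) * Real.log (y2 (sSup S)) ≤ 0 :=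
          mul_nonpos_of_nonneg_of_nonpos (mul_pos hc0 (hgpos _ hs0)).le hlog
        have h2 : 0 < y1 (sSup S) ^ a1 :=
          Real.rpow_pos_of_pos (hy1pos _ (hIccsub ⟨hs0, hst⟩)) _
        have h3 : L (sSup S) = y1 (sSup S) ^ a1 - c * g (sSup S) * Real.log (y2 (sSup S)) := rfl
        linarith
      · intro u hu1 hu2
        by_contra hcon
        push_neg at hcon
        have : u ∈ S := ⟨⟨hs0.trans hu1.le, hu2⟩, hcon⟩
        exact absurd (le_csSup hScomp.bddAbove this) (not_le.mpr hu1)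
    · push_neg at hS
      refine ⟨0, le_rfl, ht0, ?_, fun u hu1 hu2 => hS u ⟨hu1.le, hu2⟩⟩
      have h3 : L 0 = y1 0 ^ a1 - c * g 0 * Real.log (y2 0) := rfl
      linarith
  -- monotonicity of L on [s, t]
  have hIccsub : Icc s t ⊆ Ico (0:ℝ) T :=
    fun u hu => ⟨hs0.trans hu.1, lt_of_le_of_lt hu.2 htT⟩
  have hIci : Icc s t ⊆ Ici (0:ℝ) := fun u hu => hs0.trans hu.1
  have hLcont : ContinuousOn L (Icc s t) := by
    apply ContinuousOn.sub
    · exact (hy1cT.mono hIccsub).rpow_const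
        (fun u hu => Or.inl (hy1pos u (hIccsub hu)).ne')
    · exact (continuousOn_const.mul (hgc.mono hIci)).mul
        ((hy2cT.mono hIccsub).log (fun u hu => (hy2pos u (hIccsub hu)).ne'))
  have key : ∀ u ∈ Ioo s t, ∃ D : ℝ, HasDerivAt L D u ∧ 0 ≤ D := by
    intro u hu
    have hu0 : 0 < u := lt_of_le_of_lt hs0 hu.1
    have huT : u ∈ Ico (0:ℝ) T := ⟨hu0.le, hu.2.trans htT⟩
    have hn : Ico (0:ℝ) T ∈ 𝓝 u := Ico_mem_nhds hu0 (hu.2.trans htT)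
    have hy1p : 0 < y1 u := hy1pos u huT
    have hy2p : 0 < y2 u := hy2pos u huT
    have hy1' : HasDerivAt y1 (h1 u * y1 u ^ p11 * y2 u ^ p12) u := (hy1d u huT).hasDerivAt hn
    have hy2' : HasDerivAt y2 (h2 u * y2 u ^ p22 * y1 u ^ p21) u := (hy2d u huT).hasDerivAt hn
    obtain ⟨hg', hgle⟩ := hgder u hu0
    have h1pow : HasDerivAt (fun v => y1 v ^ a1)
        ((h1 u * y1 u ^ p11 * y2 u ^ p12) * a1 * y1 u ^ (a1 - 1)) u :=
      hy1'.rpow_const (Or.inl hy1p.ne')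
    have hlog : HasDerivAt (fun v => Real.log (y2 v))
        ((h2 u * y2 u ^ p22 * y1 u ^ p21) / y2 u) u := hy2'.log hy2p.ne'
    have hprod : HasDerivAt (fun v => c * g v * Real.log (y2 v))
        (c * deriv g u * Real.log (y2 u) +
          c * g u * ((h2 u * y2 u ^ p22 * y1 u ^ p21) / y2 u)) u :=
      (hg'.const_mul c).mul hlog
    refine ⟨_, h1pow.sub hprod, ?_⟩
    -- algebra
    have e1 : y1 u ^ p11 * y1 u ^ (a1 - 1) = y1 u ^ p21 := by
      rw [← Real.rpow_add hy1p]
      congr 1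
      rw [ha1def]; ring
    have hp : p22 = p12 + 1 := by linarith
    have e2 : y2 u ^ p22 = y2 u ^ p12 * y2 u := by
      rw [hp, Real.rpow_add_one hy2p.ne']
    have hgu : g u = h1 u / h2 u := rfl
    set Q : ℝ := h1 u * y1 u ^ p21 * y2 u ^ p12 with hQdef
    have hQpos : 0 < Q := by
      apply mul_pos (mul_pos (hh1p u hu0.le) (Real.rpow_pos_of_pos hy1p _))
        (Real.rpow_pos_of_pos hy2p _)
    have eA : (h1 u * y1 u ^ p11 * y2 u ^ p12) * a1 * y1 u ^ (a1 - 1) = a1 * Q := by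
      rw [hQdef, ← e1]; ring
    have eB : c * g u * ((h2 u * y2 u ^ p22 * y1 u ^ p21) / y2 u) = c * Q := by
      rw [hgu, e2, hQdef]
      field_simp [hy2p.ne', (hh2p u hu0.le).ne']
    rw [eA, eB]
    have hlogpos : 0 < Real.log (y2 u) := Real.log_pos (hgt1 u hu.1 hu.2.le)
    have h1' : c * Q ≤ a1 * Q := mul_le_mul_of_nonneg_right hca1 hQpos.le
    have h2' : c * deriv g u * Real.log (y2 u) ≤ 0 := by
      have h3 : 0 ≤ c * (-deriv g u) * Real.log (y2 u) :=
        mul_nonneg (mul_nonneg hc0.le (neg_nonneg.2 hgle)) hlogpos.le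
      nlinarith
    linarith
  have hmono : MonotoneOn L (Icc s t) := by
    apply monotoneOn_of_deriv_nonneg (convex_Icc s t) hLcont
    · intro u hu
      rw [interior_Icc] at hu
      obtain ⟨D, hD, _⟩ := key u hu
      exact hD.differentiableAt.differentiableWithinAt
    · intro u hu
      rw [interior_Icc] at hu
      obtain ⟨D, hD, hD0⟩ := key u hu
      rw [hD.deriv]; exact hD0
  have hfin : L s ≤ L t := hmono ⟨le_rfl, hst⟩ ⟨hst, le_rfl⟩ hst
  have h3 : L t = y1 t ^ a1 - c * g t * Real.log (y2 t) := rfl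
  linarith
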